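/- Discrete contraction theorem: let μ_k > 0, let f_k : ℝ^n → ℝ^n be C¹ with Jacobians Df_k, and suppose there is c̄ > 0 such that m(Df_k(ξ), μ_k) ≤ -c̄² for all ξ ∈ ℝ^n and all k, where m is the matrix measure induced by a norm |·|. Then for the iterations x_{k+1} = x_k + μ_k f_k(x_k) and y_{k+1} = y_k + μ_k f_k(y_k), one has |x_N - y_N| ≤ |x_0 - y_0| ∏_{k=0}^{N-1} (1 + μ_k·(-c̄²)) for all N (in particular 1 - μ_k c̄² ≥ 0). -/

import Mathlib

/-- Matrix measure on time scales: `m(A,μ) = (‖I + μA‖ - 1)/μ` for an induced operator norm. -/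
noncomputable def matrixMeasure {𝕜 E : Type*} [RCLike 𝕜] [NormedAddCommGroup E]
    [NormedSpace 𝕜 E] (A : E →L[𝕜] E) (μ : ℝ) : ℝ :=
  (‖(1 : E →L[𝕜] E) + (μ : 𝕜) • A‖ - 1) / μ

/-- Discrete contraction theorem: if `m(Df_k(ξ), μ_k) ≤ -c̄²` for all `ξ` and `k`, then any
two solutions of `x_{k+1} = x_k + μ_k f_k(x_k)` satisfy
`|x_N - y_N| ≤ |x_0 - y_0| ∏_{k<N}(1 + μ_k·(-c̄²))`, and in particular `1 - μ_k c̄² ≥ 0`. -/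
theorem discrete_contraction {E : Type*} [NormedAddCommGroup E] [NormedSpace ℝ E]
    (μ : ℕ → ℝ) (hμ : ∀ k, 0 < μ k) (f : ℕ → E → E) (hf : ∀ k, ContDiff ℝ 1 (f k))
    (cbar : ℝ) (hc : 0 < cbar)
    (hm : ∀ (k : ℕ) (ξ : E), matrixMeasure (fderiv ℝ (f k) ξ) (μ k) ≤ -cbar ^ 2)
    (x y : ℕ → E) (hx : ∀ k, x (k + 1) = x k + μ k • f k (x k))
    (hy : ∀ k, y (k + 1) = y k + μ k • f k (y k)) :
    (∀ k, 0 ≤ 1 - μ k * cbar ^ 2) ∧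
    ∀ N : ℕ, ‖x N - y N‖ ≤
      ‖x 0 - y 0‖ * ∏ k ∈ Finset.range N, (1 + μ k * (-cbar ^ 2)) := by
  -- Norm bound on I + μ Df
  have hnorm : ∀ (k : ℕ) (ξ : E),
      ‖(1 : E →L[ℝ] E) + (μ k : ℝ) • fderiv ℝ (f k) ξ‖ ≤ 1 - μ k * cbar ^ 2 := by
    intro k ξ
    have h := hm k ξ
    unfold matrixMeasure at h
    have h2 := (div_le_iff₀ (hμ k)).mp h
    simp only [RCLike.ofReal_real_eq_id, id] at h2
    nlinarith
  have hnonneg : ∀ k, 0 ≤ 1 - μ k * cbar ^ 2 := by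
    intro k
    have := hnorm k 0
    have := norm_nonneg ((1 : E →L[ℝ] E) + (μ k : ℝ) • fderiv ℝ (f k) 0)
    linarith
  refine ⟨hnonneg, ?_⟩
  -- the step map is Lipschitz with constant 1 - μ k c̄²
  have hstep : ∀ (k : ℕ) (a b : E),
      ‖(a + μ k • f k a) - (b + μ k • f k b)‖ ≤ (1 - μ k * cbar ^ 2) * ‖a - b‖ := by
    intro k a b
    set g : E → E := fun z => z + μ k • f k z with hg
    have hdiff : ∀ ξ : E, HasFDerivAt g
        ((1 : E →L[ℝ] E) + (μ k : ℝ) • fderiv ℝ (f k) ξ) ξ := by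
      intro ξ
      have hfd : HasFDerivAt (f k) (fderiv ℝ (f k) ξ) ξ :=
        ((hf k).differentiable one_ne_zero ξ).hasFDerivAt
      exact (hasFDerivAt_id ξ).add (hfd.const_smul (μ k))
    have := Convex.norm_image_sub_le_of_norm_hasFDerivWithin_le
      (f := g) (f' := fun ξ => (1 : E →L[ℝ] E) + (μ k : ℝ) • fderiv ℝ (f k) ξ)
      (fun ξ _ => (hdiff ξ).hasFDerivWithinAt) (fun ξ _ => hnorm k ξ)
      (convex_univ) (Set.mem_univ b) (Set.mem_univ a)
    simpa [hg] using this
  intro N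
  induction N with
  | zero => simp
  | succ N ih =>
    rw [Finset.prod_range_succ, hx, hy]
    calc ‖(x N + μ N • f N (x N)) - (y N + μ N • f N (y N))‖
        ≤ (1 - μ N * cbar ^ 2) * ‖x N - y N‖ := hstep N (x N) (y N)
      _ ≤ (1 - μ N * cbar ^ 2) *
            (‖x 0 - y 0‖ * ∏ k ∈ Finset.range N, (1 + μ k * (-cbar ^ 2))) :=
          mul_le_mul_of_nonneg_left ih (hnonneg N)
      _ = ‖x 0 - y 0‖ * ((∏ k ∈ Finset.range N, (1 + μ k * (-cbar ^ 2))) *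
            (1 + μ N * (-cbar ^ 2))) := by ring
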